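/- Let h(t) = (1/2)(1−t)² log((1−t)²) + (1/2)(1+t)² log((1+t)²) − (1+t²) log(1+t²). Then for every t ∈ [0,1), (1−t²)·h'(t) ≥ t·h''(t), where h'(t) = 2((1+t) log(1+t) − (1−t) log(1−t) − t log(1+t²)) and h''(t) = 4/(1+t²) − 2 log((1+t²)/(1−t²)). -/

import Mathlib

/-- `h(t) = (1/2)(1−t)² log((1−t)²) + (1/2)(1+t)² log((1+t)²) − (1+t²) log(1+t²)`
(note `Real.log 0 = 0`). -/
noncomputable def hFun (t : ℝ) : ℝ :=
  (1 / 2) * (1 - t) ^ 2 * Real.log ((1 - t) ^ 2) +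
    (1 / 2) * (1 + t) ^ 2 * Real.log ((1 + t) ^ 2) -
    (1 + t ^ 2) * Real.log (1 + t ^ 2)

/-- The derivative of `h`:
`h'(t) = 2((1+t) log(1+t) − (1−t) log(1−t) − t log(1+t²))`. -/
noncomputable def hFun' (t : ℝ) : ℝ :=
  2 * ((1 + t) * Real.log (1 + t) - (1 - t) * Real.log (1 - t) -
    t * Real.log (1 + t ^ 2))

/-- The second derivative of `h`: `h''(t) = 4/(1+t²) − 2 log((1+t²)/(1−t²))`. -/
noncomputable def hFun'' (t : ℝ) : ℝ :=
  4 / (1 + t ^ 2) - 2 * Real.log ((1 + t ^ 2) / (1 - t ^ 2))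

/-- Key estimate: `2x ≤ log(1+x) − log(1−x)` for `x ∈ [0,1)`. -/
lemma two_mul_le_log_sub_log {x : ℝ} (h0 : 0 ≤ x) (h1 : x < 1) :
    2 * x ≤ Real.log (1 + x) - Real.log (1 - x) := by
  set f : ℝ → ℝ := fun y => Real.log (1 + y) - Real.log (1 - y) - 2 * y with hf
  have hder : ∀ y ∈ Set.Icc (0 : ℝ) x,
      HasDerivAt f (1 / (1 + y) + 1 / (1 - y) - 2) y := by
    intro y hy
    have hy0 : 0 ≤ y := hy.1
    have hyx : y ≤ x := hy.2
    have hy1 : (1 : ℝ) + y ≠ 0 := by linarith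
    have hy2 : (1 : ℝ) - y ≠ 0 := by nlinarith
    have hA : HasDerivAt (fun y : ℝ => Real.log (1 + y)) (1 / (1 + y)) y := by
      have := ((hasDerivAt_id y).const_add (1 : ℝ)).log hy1
      simpa using this
    have hB : HasDerivAt (fun y : ℝ => Real.log (1 - y)) (-(1 / (1 - y))) y := by
      have := ((hasDerivAt_id y).const_sub (1 : ℝ)).log hy2
      simpa [neg_div] using this
    have hC : HasDerivAt (fun y : ℝ => 2 * y) 2 y := by
      simpa using (hasDerivAt_id y).const_mul (2 : ℝ)
    have := (hA.sub hB).sub hC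
    simpa [hf, sub_neg_eq_add, Pi.sub_def] using this
  have hmono : MonotoneOn f (Set.Icc 0 x) := by
    apply monotoneOn_of_deriv_nonneg (convex_Icc 0 x)
    · intro y hy
      exact (hder y hy).continuousAt.continuousWithinAt
    · intro y hy
      rw [interior_Icc] at hy
      exact ((hder y ⟨le_of_lt hy.1, le_of_lt hy.2⟩).differentiableAt).differentiableWithinAt
    · intro y hy
      rw [interior_Icc] at hy
      have hd := hder y ⟨le_of_lt hy.1, le_of_lt hy.2⟩
      rw [hd.deriv]
      have h1y : (0 : ℝ) < 1 + y := by linarith [hy.1]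
      have h2y : (0 : ℝ) < 1 - y := by linarith [hy.2, h1]
      have heq : 1 / (1 + y) + 1 / (1 - y) - 2
          = 2 * y ^ 2 / ((1 + y) * (1 - y)) := by
        field_simp
        ring
      rw [heq]
      positivity
  have h00 : (0 : ℝ) ∈ Set.Icc (0 : ℝ) x := by constructor <;> linarith
  have hxx : x ∈ Set.Icc (0 : ℝ) x := by constructor <;> linarith
  have := hmono h00 hxx h0
  simp only [hf, Real.log_one, add_zero, sub_zero, mul_zero] at this
  linarith

/-- For every `t ∈ [0,1)`, `(1−t²)·h'(t) ≥ t·h''(t)`. -/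
theorem hFun_derivative_inequality :
    ∀ t ∈ Set.Ico (0 : ℝ) 1, (1 - t ^ 2) * hFun' t ≥ t * hFun'' t := by
  intro t ht
  obtain ⟨ht0, ht1⟩ := ht
  have h1 : (0 : ℝ) < 1 + t := by linarith
  have h2 : (0 : ℝ) < 1 - t := by linarith
  have h3 : (0 : ℝ) < 1 + t ^ 2 := by positivity
  have h4 : (0 : ℝ) < 1 - t ^ 2 := by nlinarith
  have key1 : 2 * t ≤ Real.log (1 + t) - Real.log (1 - t) :=
    two_mul_le_log_sub_log ht0 ht1
  have key2 : 2 * t ^ 2 ≤ Real.log (1 + t ^ 2) - Real.log (1 - t ^ 2) :=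
    two_mul_le_log_sub_log (sq_nonneg t) (by nlinarith)
  have hlogdiv : Real.log ((1 + t ^ 2) / (1 - t ^ 2))
      = Real.log (1 + t ^ 2) - Real.log (1 - t ^ 2) :=
    Real.log_div (ne_of_gt h3) (ne_of_gt h4)
  have hlogmul : Real.log (1 - t ^ 2) = Real.log (1 + t) + Real.log (1 - t) := by
    rw [show (1 : ℝ) - t ^ 2 = (1 + t) * (1 - t) by ring,
      Real.log_mul (ne_of_gt h1) (ne_of_gt h2)]
  have hfrac : 4 * t / (1 + t ^ 2) ≤ 4 * t - 4 * t ^ 3 + 4 * t ^ 5 := by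
    rw [div_le_iff₀ h3]
    nlinarith [pow_nonneg ht0 7]
  have hm1 : 0 ≤ (1 - t ^ 2) * ((Real.log (1 + t) - Real.log (1 - t)) - 2 * t) :=
    mul_nonneg (le_of_lt h4) (by linarith)
  have hm2 : 0 ≤ t ^ 3 * ((Real.log (1 + t ^ 2) - Real.log (1 - t ^ 2)) - 2 * t ^ 2) :=
    mul_nonneg (pow_nonneg ht0 3) (by linarith)
  unfold hFun' hFun''
  rw [hlogdiv, ge_iff_le, hlogmul]
  rw [hlogmul] at hm2
  have ht2 : t * (4 / (1 + t ^ 2)) = 4 * t / (1 + t ^ 2) := by ring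
  nlinarith [hm1, hm2, hfrac, ht2]
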